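/- For fixed integers r, j ≥ 0 with r > 0 or j > 0, and for all n ≥ 1, p^r_j(n+4) ≡ p^r_j(n) (mod 10); that is, the last digit of the sequence p^r_j(n) is periodic with period 4. -/

import Mathlib

/-- `p r j n` : the number of restricted barred preferential arrangements of an `n`-set with
`r` restricted sections and `j` free sections, given by the convergent series
`p^r_j(n) = \sum_{s=0}^\infty C(j+s-1, s) (r+s)^n / 2^(j+s)`
(the coefficient of `m^n/n!` in `e^{rm}/(2-e^m)^j`). -/
noncomputable def p (r j n : ℕ) : ℝ :=
  ∑' s : ℕ, ((j + s - 1).choose s : ℝ) * ((r + s : ℕ) : ℝ) ^ n / 2 ^ (j + s)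

namespace BPA

noncomputable def term (r j n s : ℕ) : ℝ :=
  ((j + s - 1).choose s : ℝ) * ((r + s : ℕ) : ℝ) ^ n / 2 ^ (j + s)

lemma p_eq (r j n : ℕ) : p r j n = ∑' s, term r j n s := rfl

lemma term_nonneg (r j n s : ℕ) : 0 ≤ term r j n s := by
  unfold term; positivity

lemma choose_bound (j s : ℕ) : (j + s - 1).choose s ≤ (j + s) ^ j := by
  cases j with
  | zero =>
    cases s with
    | zero => simp
    | succ t =>
      have : (0 + (t+1) - 1).choose (t+1) = 0 := by
        have h : 0 + (t+1) - 1 = t := by omega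
        rw [h]; exact Nat.choose_eq_zero_of_lt (by omega)
      simp [this]
  | succ j =>
    have h1 : j + 1 + s - 1 = s + j := by omega
    rw [h1, Nat.choose_symm_add]
    calc (s + j).choose j ≤ (s + j) ^ j := Nat.choose_le_pow _ _
      _ ≤ (j + 1 + s) ^ j := Nat.pow_le_pow_left (by omega) _
      _ ≤ (j + 1 + s) ^ (j+1) := Nat.pow_le_pow_right (by omega) (by omega)

lemma summable_term (r j n : ℕ) : Summable (term r j n) := by
  have hhalf : ‖(1/2 : ℝ)‖ < 1 := by rw [Real.norm_eq_abs, abs_of_pos] <;> norm_num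
  have h0 : Summable (fun s : ℕ => (s : ℝ) ^ (j + n) * (1/2 : ℝ) ^ s) :=
    summable_pow_mul_geometric_of_norm_lt_one _ hhalf
  have h1 : Summable (fun s : ℕ => ((s + 1 : ℕ) : ℝ) ^ (j + n) * (1/2 : ℝ) ^ (s + 1)) := by
    exact_mod_cast (summable_nat_add_iff 1).mpr h0
  have h2 := h1.mul_left ((((j+1) ^ j * (r+1) ^ n : ℕ) : ℝ) * 2)
  apply Summable.of_nonneg_of_le (term_nonneg r j n) _ h2
  intro s
  have hnat : (j + s - 1).choose s * (r + s) ^ n ≤ ((j+1) ^ j * (r+1) ^ n) * (s+1) ^ (j + n) := by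
    calc (j + s - 1).choose s * (r + s) ^ n ≤ (j + s) ^ j * (r + s) ^ n := by
          exact Nat.mul_le_mul_right _ (choose_bound j s)
      _ ≤ ((j+1) * (s+1)) ^ j * ((r+1) * (s+1)) ^ n := by
          apply Nat.mul_le_mul <;> apply Nat.pow_le_pow_left <;> nlinarith
      _ = ((j+1) ^ j * (r+1) ^ n) * (s+1) ^ (j + n) := by
          rw [mul_pow, mul_pow, pow_add]; ring
  calc term r j n s
      = (((j + s - 1).choose s * (r + s) ^ n : ℕ) : ℝ) / 2 ^ (j + s) := by
        unfold term; push_cast; ring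
    _ ≤ (((j + s - 1).choose s * (r + s) ^ n : ℕ) : ℝ) / 2 ^ s := by
        apply div_le_div_of_nonneg_left (by positivity) (by positivity)
        apply pow_le_pow_right₀ (by norm_num) (by omega)
    _ ≤ ((((j+1) ^ j * (r+1) ^ n) * (s+1) ^ (j + n) : ℕ) : ℝ) / 2 ^ s := by
        apply div_le_div_of_nonneg_right ?_ (by positivity)
        exact_mod_cast hnat
    _ = (((j+1) ^ j * (r+1) ^ n : ℕ) : ℝ) * 2 * (((s + 1 : ℕ) : ℝ) ^ (j + n) * (1/2 : ℝ) ^ (s + 1)) := by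
        push_cast; simp only [one_div, inv_pow]; field_simp; ring


lemma p_j0 (r n : ℕ) : p r 0 n = (r : ℝ) ^ n := by
  rw [p_eq, tsum_eq_single 0]
  · unfold term; simp
  · intro s hs
    cases s with
    | zero => exact absurd rfl hs
    | succ t =>
      unfold term
      have h : 0 + (t+1) - 1 = t := by omega
      rw [h, Nat.choose_eq_zero_of_lt (by omega)]
      simp

lemma term_zero (r j n : ℕ) : term r j n 0 = (r : ℝ) ^ n / 2 ^ j := by
  unfold term; simp

lemma p_split (r j n : ℕ) : p r (j+1) n = (p r j n + p (r+1) (j+1) n) / 2 := by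
  have hA : Summable (term r j n) := summable_term r j n
  have hA' : Summable (fun t => term r j n (t+1)) := (summable_nat_add_iff 1).mpr hA
  have hB : Summable (term (r+1) (j+1) n) := summable_term (r+1) (j+1) n
  have key : ∀ t, term r (j+1) n (t+1)
      = (1/2) * term (r+1) (j+1) n t + (1/2) * term r j n (t+1) := by
    intro t
    unfold term
    have hc : j + 1 + (t+1) - 1 = (j + t) + 1 := by omega
    rw [hc, Nat.choose_succ_succ]
    have h1 : j + (t+1) - 1 = j + t := by omega
    have h2 : j + 1 + t - 1 = j + t := by omega
    rw [h1, h2]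
    have e1 : j + 1 + (t+1) = (j + t + 1) + 1 := by omega
    have e2 : j + 1 + t = j + t + 1 := by omega
    have e3 : j + (t+1) = j + t + 1 := by omega
    rw [e1, e2, e3]
    have e4 : r + (t+1) = r + 1 + t := by omega
    rw [e4]
    push_cast
    rw [pow_succ]
    ring
  rw [p_eq, Summable.tsum_eq_zero_add (summable_term r (j+1) n)]
  rw [tsum_congr key, Summable.tsum_add (hB.mul_left _) (hA'.mul_left _), tsum_mul_left, tsum_mul_left]
  have hshift : ∑' t, term r j n (t+1) = p r j n - term r j n 0 := by
    rw [p_eq, Summable.tsum_eq_zero_add hA]; ring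
  rw [hshift, ← p_eq, term_zero, term_zero]
  rw [pow_succ]
  ring

lemma p_step (j n : ℕ) : p 0 j (n+1) = (j : ℝ) * p 1 (j+1) n := by
  rw [p_eq, Summable.tsum_eq_zero_add (summable_term 0 j (n+1))]
  have h0 : term 0 j (n+1) 0 = 0 := by
    unfold term; simp
  have key : ∀ t, term 0 j (n+1) (t+1) = (j : ℝ) * term 1 (j+1) n t := by
    intro t
    unfold term
    have h1 : j + (t+1) - 1 = j + t := by omega
    have h2 : j + 1 + t - 1 = j + t := by omega
    rw [h1, h2]
    have hch : (j + t).choose (t+1) * (t+1) = (j + t).choose t * j := by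
      rw [Nat.choose_succ_right_eq]; congr 1; omega
    have hcast : ((j + t).choose (t+1) : ℝ) * ((t+1 : ℕ) : ℝ)
        = ((j + t).choose t : ℝ) * (j : ℝ) := by exact_mod_cast congrArg (Nat.cast (R := ℝ)) hch
    have e1 : j + (t+1) = j + 1 + t := by omega
    rw [e1]
    have e2 : (0 + (t+1) : ℕ) = t + 1 := by omega
    have e3 : (1 + t : ℕ) = t + 1 := by omega
    rw [e2, e3, pow_succ]
    push_cast at hcast ⊢
    field_simp
    linear_combination hcast
  rw [h0, zero_add, tsum_congr key, tsum_mul_left, ← p_eq]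

lemma p_indep (r r' j : ℕ) : p r j 0 = p r' j 0 := by
  rw [p_eq, p_eq]
  exact tsum_congr fun s => by unfold term; simp

lemma p_n0 : ∀ j r, p r j 0 = 1 := by
  intro j
  induction j with
  | zero => intro r; rw [p_j0, pow_zero]
  | succ j ih =>
    intro r
    have h := p_split r j 0
    rw [p_indep (r+1) r (j+1), ih r] at h
    linarith


/-- integer recurrence: `qa n r j` = value of `p r j n`. -/
def qa : ℕ → ℕ → ℕ → ℤ :=
  Nat.rec (motive := fun _ => ℕ → ℕ → ℤ) (fun _ _ => 1)
    (fun n prev =>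
      Nat.rec (motive := fun _ => ℕ → ℤ)
        (fun j => Nat.rec (motive := fun _ => ℤ) 0
          (fun j' _ => ((j' + 1 : ℕ) : ℤ) * prev 1 (j' + 2)) j)
        (fun r prevr j =>
          Nat.rec (motive := fun _ => ℤ) (((r + 1 : ℕ) : ℤ) ^ (n + 1))
            (fun j' _ => 2 * prevr (j' + 1) - prevr j') j))

lemma qa_zero (r j : ℕ) : qa 0 r j = 1 := rfl
lemma qa_r0_j0 (n : ℕ) : qa (n+1) 0 0 = 0 := rfl
lemma qa_r0 (n j : ℕ) : qa (n+1) 0 (j+1) = ((j + 1 : ℕ) : ℤ) * qa n 1 (j + 2) := rfl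
lemma qa_j0 (n r : ℕ) : qa (n+1) (r+1) 0 = ((r + 1 : ℕ) : ℤ) ^ (n+1) := rfl
lemma qa_rs (n r j : ℕ) : qa (n+1) (r+1) (j+1) = 2 * qa (n+1) r (j+1) - qa (n+1) r j := rfl

lemma qa_pow (n r : ℕ) : qa n r 0 = (r : ℤ) ^ n := by
  cases n with
  | zero => simp [qa_zero]
  | succ n =>
    cases r with
    | zero => simp [qa_r0_j0]
    | succ r => rw [qa_j0]

/-- same recurrence computed in `ZMod 10`. -/
def qm : ℕ → ℕ → ℕ → ZMod 10 :=
  Nat.rec (motive := fun _ => ℕ → ℕ → ZMod 10) (fun _ _ => 1)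
    (fun n prev =>
      Nat.rec (motive := fun _ => ℕ → ZMod 10)
        (fun j => Nat.rec (motive := fun _ => ZMod 10) 0
          (fun j' _ => ((j' + 1 : ℕ) : ZMod 10) * prev 1 (j' + 2)) j)
        (fun r prevr j =>
          Nat.rec (motive := fun _ => ZMod 10) (((r + 1 : ℕ) : ZMod 10) ^ (n + 1))
            (fun j' _ => 2 * prevr (j' + 1) - prevr j') j))

lemma qm_zero (r j : ℕ) : qm 0 r j = 1 := rfl
lemma qm_r0_j0 (n : ℕ) : qm (n+1) 0 0 = 0 := rfl
lemma qm_r0 (n j : ℕ) : qm (n+1) 0 (j+1) = ((j + 1 : ℕ) : ZMod 10) * qm n 1 (j + 2) := rfl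
lemma qm_j0 (n r : ℕ) : qm (n+1) (r+1) 0 = ((r + 1 : ℕ) : ZMod 10) ^ (n+1) := rfl
lemma qm_rs (n r j : ℕ) : qm (n+1) (r+1) (j+1) = 2 * qm (n+1) r (j+1) - qm (n+1) r j := rfl

lemma qm_pow (n r : ℕ) : qm n r 0 = (r : ZMod 10) ^ n := by
  cases n with
  | zero => simp [qm_zero]
  | succ n =>
    cases r with
    | zero => simp [qm_r0_j0]
    | succ r => rw [qm_j0]

lemma qa_cast (n : ℕ) : ∀ r j, ((qa n r j : ℤ) : ZMod 10) = qm n r j := by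
  induction n with
  | zero => intro r j; simp [qa_zero, qm_zero]
  | succ n ih =>
    intro r
    induction r with
    | zero =>
      intro j
      cases j with
      | zero => simp [qa_r0_j0, qm_r0_j0]
      | succ j => rw [qa_r0, qm_r0]; push_cast; rw [ih 1 (j+2)]
    | succ r ihr =>
      intro j
      cases j with
      | zero => rw [qa_j0, qm_j0]; push_cast; ring
      | succ j => rw [qa_rs, qm_rs]; push_cast; rw [ihr (j+1), ihr j]


set_option maxRecDepth 10000 in
lemma T1 : ∀ b < 10, ∀ c < 5,
    qm (c % 4 + 1) 0 b = (b : ZMod 10) * qm c 1 ((b + 1) % 10) := by decide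

set_option maxRecDepth 10000 in
lemma T2 : ∀ a < 10, ∀ b < 10, ∀ c < 5,
    qm c ((a + 1) % 10) b = 2 * qm c a b - qm c a ((b + 9) % 10) := by decide

/-- representative of `n` : `0` for `n = 0`, otherwise in `{1,2,3,4}` with `ρ n ≡ n [MOD 4]`. -/
def ρ (n : ℕ) : ℕ := if n = 0 then 0 else (n - 1) % 4 + 1

lemma rho_succ' (n : ℕ) : ρ (n+1) = n % 4 + 1 := by simp [ρ]

lemma rho_lt (n : ℕ) : ρ n < 5 := by
  unfold ρ; split <;> omega

lemma rho_mod (n : ℕ) : ρ (n+1) = ρ n % 4 + 1 := by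
  cases n with
  | zero => simp [ρ]
  | succ n => rw [rho_succ', rho_succ']; omega

lemma zmod10_pow5 (x : ZMod 10) : x ^ 5 = x := by revert x; decide

lemma pow_period (x : ZMod 10) : ∀ m : ℕ, x ^ (m + 1) = x ^ (m % 4 + 1) := by
  intro m
  induction m using Nat.strong_induction_on with
  | _ m ih =>
    rcases lt_or_ge m 4 with h | h
    · rw [Nat.mod_eq_of_lt h]
    · calc x ^ (m+1) = x ^ (m-4) * x ^ 5 := by rw [← pow_add]; congr 1; omega
        _ = x ^ (m-4+1) := by rw [zmod10_pow5, ← pow_succ]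
        _ = x ^ ((m-4) % 4 + 1) := ih _ (by omega)
        _ = x ^ (m % 4 + 1) := by congr 1; omega

lemma qm_mod (n : ℕ) : ∀ r j, qm n r j = qm (ρ n) (r % 10) (j % 10) := by
  induction n with
  | zero => intro r j; rw [qm_zero]; simp [ρ, qm_zero]
  | succ n ih =>
    intro r
    induction r with
    | zero =>
      intro j
      cases j with
      | zero =>
        rw [qm_r0_j0, rho_succ']
        simp [qm_r0_j0]
      | succ j =>
        rw [qm_r0, ih 1 (j+2)]
        have h1 : (1 : ℕ) % 10 = 1 := by norm_num
        have h2 : (j + 2) % 10 = ((j + 1) % 10 + 1) % 10 := by omega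
        have h3 : ((j + 1 : ℕ) : ZMod 10) = (((j + 1) % 10 : ℕ) : ZMod 10) :=
          (ZMod.natCast_mod _ _).symm
        rw [h1, h2, h3, rho_succ', show n % 4 + 1 = ρ n % 4 + 1 from by
          rw [← rho_succ', rho_mod]]
        exact (T1 _ (by omega) _ (rho_lt n)).symm
    | succ r ihr =>
      intro j
      cases j with
      | zero =>
        rw [qm_j0, rho_succ', qm_pow]
        have h3 : ((((r + 1) % 10 : ℕ)) : ZMod 10) = ((r + 1 : ℕ) : ZMod 10) :=
          ZMod.natCast_mod _ _
        rw [h3]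
        exact pow_period _ n
      | succ j =>
        rw [qm_rs, ihr (j+1), ihr j]
        rw [show j % 10 = ((j + 1) % 10 + 9) % 10 from by omega,
            show (r + 1) % 10 = (r % 10 + 1) % 10 from by omega]
        exact (T2 (r % 10) (by omega) ((j+1) % 10) (by omega) (ρ (n+1)) (rho_lt _)).symm

lemma rho_add_four (n : ℕ) (hn : 1 ≤ n) : ρ (n + 4) = ρ n := by
  unfold ρ; split <;> split <;> omega



lemma p_eq_qa : ∀ n r j, p r j n = ((qa n r j : ℤ) : ℝ) := by
  intro n
  induction n with
  | zero => intro r j; rw [p_n0, qa_zero]; norm_num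
  | succ n ih =>
    intro r
    induction r with
    | zero =>
      intro j
      cases j with
      | zero => rw [p_j0, qa_r0_j0]; push_cast; ring
      | succ j =>
        rw [p_step (j+1) n, ih 1 (j+2), qa_r0]
        push_cast; ring
    | succ r ihr =>
      intro j
      cases j with
      | zero => rw [p_j0, qa_j0]; push_cast; ring
      | succ j =>
        have h := p_split r j (n+1)
        rw [ihr (j+1), ihr j] at h
        rw [qa_rs]
        push_cast at h ⊢
        linarith [h]

end BPA

/-- The last digit of the sequence `p^r_j(n)` has a four cycle:
`p^r_j(n+4) ≡ p^r_j(n) (mod 10)` (the values are integers). -/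
theorem stmt2 (r j : ℕ) (h : 0 < r ∨ 0 < j) (n : ℕ) (hn : 1 ≤ n) :
    ∃ k : ℤ, p r j (n + 4) - p r j n = 10 * k := by
  have h1 : ((BPA.qa (n+4) r j - BPA.qa n r j : ℤ) : ZMod 10) = 0 := by
    push_cast [BPA.qa_cast]
    rw [BPA.qm_mod (n+4), BPA.qm_mod n, BPA.rho_add_four n hn, sub_self]
  rw [ZMod.intCast_zmod_eq_zero_iff_dvd] at h1
  obtain ⟨k, hk⟩ := h1
  refine ⟨k, ?_⟩
  rw [BPA.p_eq_qa, BPA.p_eq_qa, ← Int.cast_sub, hk]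
  push_cast; ring
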